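/- A square cannot be partitioned into finitely many rectangles each having side ratio √2 or 1/√2. -/
import Mathlib

open Set Polynomial

noncomputable section
set_option synthInstance.maxHeartbeats 1000000 in

lemma exists_dehn_fun : ∃ f : ℝ → ℝ,
    (∀ a b : ℝ, f (a+b) = f a + f b) ∧ f 1 = 1 ∧
    (∀ t : ℝ, f (Real.sqrt 2 * t) = -Real.sqrt 2 * f t) := by
  classical
  have hirr : Irreducible ((X:ℚ[X])^2 - C 2) := by
    apply X_pow_sub_C_irreducible_of_prime Nat.prime_two
    intro b hb
    have hb2 : ((b:ℝ))^2 = 2 := by exact_mod_cast congrArg (fun q : ℚ => (q:ℝ)) hb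
    have h2 : Real.sqrt 2 = |(b:ℝ)| := by
      rw [← Real.sqrt_sq_eq_abs, hb2]
    rcases abs_cases ((b:ℝ)) with ⟨h1,_⟩|⟨h1,_⟩ <;> rw [h1] at h2
    · exact irrational_sqrt_two (h2 ▸ ⟨b, rfl⟩)
    · exact irrational_sqrt_two (h2 ▸ ⟨-b, by push_cast; ring⟩)
  haveI : Fact (Irreducible ((X:ℚ[X])^2 - C 2)) := ⟨hirr⟩
  set P : ℚ[X] := (X:ℚ[X])^2 - C 2 with hP
  have heval : ∀ s : ℝ, s^2 = 2 → P.eval₂ (algebraMap ℚ ℝ) s = 0 := by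
    intro s hs
    simp [hP, hs]
  set ι : AdjoinRoot P →+* ℝ :=
    AdjoinRoot.lift (algebraMap ℚ ℝ) (Real.sqrt 2) (heval _ (Real.sq_sqrt (by norm_num)))
    with hι
  set τ : AdjoinRoot P →+* ℝ :=
    AdjoinRoot.lift (algebraMap ℚ ℝ) (-Real.sqrt 2)
      (heval _ (by rw [neg_pow]; simp [Real.sq_sqrt])) with hτ
  letI : Module (AdjoinRoot P) ℝ := Module.compHom ℝ ι
  have hsmul : ∀ (c : AdjoinRoot P) (t : ℝ), c • t = ι c * t := fun _ _ => rfl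
  set p : Submodule (AdjoinRoot P) ℝ := Submodule.span (AdjoinRoot P) {(1:ℝ)} with hp
  obtain ⟨q, hq⟩ := Submodule.exists_isCompl p
  set π := p.linearProjOfIsCompl q hq
  set eqv := LinearEquiv.toSpanNonzeroSingleton (AdjoinRoot P) ℝ 1 one_ne_zero
  set φ : ℝ →ₗ[AdjoinRoot P] AdjoinRoot P := eqv.symm.toLinearMap ∘ₗ π with hφ
  refine ⟨fun t => τ (φ t), ?_, ?_, ?_⟩
  · intro a b; show τ (φ (a+b)) = τ (φ a) + τ (φ b); rw [map_add, map_add]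
  · have h1 : φ 1 = 1 := by
      have hmem : (1:ℝ) ∈ p := Submodule.mem_span_singleton_self 1
      have : π 1 = ⟨1, hmem⟩ := p.linearProjOfIsCompl_apply_left hq ⟨1, hmem⟩
      rw [hφ]
      simp only [LinearMap.coe_comp, Function.comp_apply, this]
      have : eqv 1 = ⟨1, hmem⟩ := by
        apply Subtype.ext
        simp [eqv, LinearEquiv.toSpanNonzeroSingleton, hsmul]
      rw [← this]; simp
    show τ (φ 1) = 1
    simp [h1]
  · intro t
    have hroot : Real.sqrt 2 * t = (AdjoinRoot.root P) • t := by
      rw [hsmul, hι, AdjoinRoot.lift_root]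
    show τ (φ (Real.sqrt 2 * t)) = _
    rw [hroot, map_smul]
    have : τ (AdjoinRoot.root P • φ t) = τ (AdjoinRoot.root P * φ t) := rfl
    rw [this, map_mul, hτ, AdjoinRoot.lift_root]


def gridFun (S : Finset ℝ) : ℕ → ℝ :=
  fun k => if hk : k < S.card then (S.orderIsoOfFin rfl ⟨k, hk⟩ : ℝ) else 0

lemma gridFun_mem (S : Finset ℝ) {k : ℕ} (hk : k < S.card) : gridFun S k ∈ S := by
  simp only [gridFun, dif_pos hk]
  exact (S.orderIsoOfFin rfl ⟨k, hk⟩).2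

lemma gridFun_lt_iff (S : Finset ℝ) {k l : ℕ} (hk : k < S.card) (hl : l < S.card) :
    gridFun S k < gridFun S l ↔ k < l := by
  simp only [gridFun, dif_pos hk, dif_pos hl]
  rw [show ((S.orderIsoOfFin rfl ⟨k, hk⟩ : S) : ℝ) < (S.orderIsoOfFin rfl ⟨l, hl⟩ : S)
      ↔ (S.orderIsoOfFin rfl ⟨k, hk⟩ : S) < S.orderIsoOfFin rfl ⟨l, hl⟩ from Iff.rfl,
    OrderIso.lt_iff_lt]
  exact Fin.lt_iff_val_lt_val

lemma gridFun_le_iff (S : Finset ℝ) {k l : ℕ} (hk : k < S.card) (hl : l < S.card) :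
    gridFun S k ≤ gridFun S l ↔ k ≤ l := by
  rw [← not_lt, ← not_lt, not_iff_not]
  exact gridFun_lt_iff S hl hk

lemma gridFun_surj (S : Finset ℝ) {z : ℝ} (hz : z ∈ S) :
    ∃ k, k < S.card ∧ gridFun S k = z := by
  obtain ⟨j, hj⟩ := (S.orderIsoOfFin rfl).surjective ⟨z, hz⟩
  exact ⟨j.1, j.2, by simp [gridFun, dif_pos j.2, Fin.eta, hj]⟩

lemma gridFun_le_of_lt_succ (S : Finset ℝ) {z : ℝ} (hz : z ∈ S) {k : ℕ}
    (hk : k + 1 < S.card) (h : z < gridFun S (k+1)) : z ≤ gridFun S k := by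
  obtain ⟨j, hj, rfl⟩ := gridFun_surj S hz
  have : j < k + 1 := (gridFun_lt_iff S hj hk).1 h
  exact (gridFun_le_iff S hj (Nat.lt_of_succ_lt hk)).2 (Nat.lt_succ_iff.1 this)

lemma gridFun_succ_le_of_lt (S : Finset ℝ) {z : ℝ} (hz : z ∈ S) {k : ℕ}
    (hk : k < S.card) (h : gridFun S k < z) : k + 1 < S.card ∧ gridFun S (k+1) ≤ z := by
  obtain ⟨j, hj, rfl⟩ := gridFun_surj S hz
  have hkj : k < j := (gridFun_lt_iff S hk hj).1 h
  exact ⟨Nat.lt_of_le_of_lt hkj hj, (gridFun_le_iff S (Nat.lt_of_le_of_lt hkj hj) hj).2 hkj⟩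

lemma gridFun_zero (S : Finset ℝ) (h0 : (0:ℝ) ∈ S) (hsub : ∀ z ∈ S, (0:ℝ) ≤ z) :
    gridFun S 0 = 0 := by
  have hc : 0 < S.card := Finset.card_pos.2 ⟨0, h0⟩
  obtain ⟨j, hj, hj'⟩ := gridFun_surj S h0
  have h1 : gridFun S 0 ≤ gridFun S j := (gridFun_le_iff S hc hj).2 (Nat.zero_le j)
  have h2 : 0 ≤ gridFun S 0 := hsub _ (gridFun_mem S hc)
  rw [hj'] at h1; linarith

lemma gridFun_last (S : Finset ℝ) (h1 : (1:ℝ) ∈ S) (hsub : ∀ z ∈ S, z ≤ (1:ℝ)) :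
    gridFun S (S.card - 1) = 1 := by
  have hc : 0 < S.card := Finset.card_pos.2 ⟨1, h1⟩
  have hc' : S.card - 1 < S.card := Nat.sub_lt hc one_pos
  obtain ⟨j, hj, hj'⟩ := gridFun_surj S h1
  have ha : gridFun S j ≤ gridFun S (S.card - 1) :=
    (gridFun_le_iff S hj hc').2 (Nat.le_sub_one_of_lt hj |>.trans (le_refl _))
  have hb : gridFun S (S.card - 1) ≤ 1 := hsub _ (gridFun_mem S hc')
  rw [hj'] at ha; linarith

lemma telescope_Ico (F : ℕ → ℝ) {a b : ℕ} (hab : a ≤ b) :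
    ∑ k ∈ Finset.Ico a b, (F (k+1) - F k) = F b - F a := by
  rw [Finset.sum_Ico_eq_sub _ hab, Finset.sum_range_sub, Finset.sum_range_sub]
  ring

lemma grid_sum {n : ℕ} (x y w h : Fin n → ℝ)
    (hw : ∀ i, 0 < w i) (hh : ∀ i, 0 < h i)
    (hU : (⋃ i, Icc (x i) (x i + w i) ×ˢ Icc (y i) (y i + h i))
        = Icc (0:ℝ) 1 ×ˢ Icc (0:ℝ) 1)
    (hD : ∀ i j, i ≠ j →
        Disjoint (Ioo (x i) (x i + w i) ×ˢ Ioo (y i) (y i + h i))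
                 (Ioo (x j) (x j + w j) ×ˢ Ioo (y j) (y j + h j)))
    (f : ℝ → ℝ) :
    ∑ i, (f (x i + w i) - f (x i)) * (f (y i + h i) - f (y i))
      = (f 1 - f 0) * (f 1 - f 0) := by
  classical
  -- corner bounds
  have hsub : ∀ i, Icc (x i) (x i + w i) ×ˢ Icc (y i) (y i + h i)
      ⊆ Icc (0:ℝ) 1 ×ˢ Icc (0:ℝ) 1 := by
    intro i; rw [← hU]
    exact Set.subset_iUnion (fun j => Icc (x j) (x j + w j) ×ˢ Icc (y j) (y j + h j)) i
  have hbound : ∀ i, 0 ≤ x i ∧ x i + w i ≤ 1 ∧ 0 ≤ y i ∧ y i + h i ≤ 1 := by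
    intro i
    have hp1 : ((x i, y i) : ℝ × ℝ) ∈ Icc (x i) (x i + w i) ×ˢ Icc (y i) (y i + h i) := by
      simp only [Set.mem_prod, Set.mem_Icc]
      refine ⟨⟨le_refl _, ?_⟩, ⟨le_refl _, ?_⟩⟩ <;> [linarith [hw i]; linarith [hh i]]
    have hp2 : ((x i + w i, y i + h i) : ℝ × ℝ)
        ∈ Icc (x i) (x i + w i) ×ˢ Icc (y i) (y i + h i) := by
      simp only [Set.mem_prod, Set.mem_Icc]
      refine ⟨⟨?_, le_refl _⟩, ⟨?_, le_refl _⟩⟩ <;> [linarith [hw i]; linarith [hh i]]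
    have h1 := hsub i hp1
    have h2 := hsub i hp2
    simp only [Set.mem_prod, Set.mem_Icc] at h1 h2
    exact ⟨h1.1.1, h2.1.2, h1.2.1, h2.2.2⟩
  -- grids
  set X : Finset ℝ := insert 0 (insert 1
    (Finset.image x Finset.univ ∪ Finset.image (fun i => x i + w i) Finset.univ)) with hX
  set Y : Finset ℝ := insert 0 (insert 1
    (Finset.image y Finset.univ ∪ Finset.image (fun i => y i + h i) Finset.univ)) with hY
  have hX0 : (0:ℝ) ∈ X := Finset.mem_insert_self _ _
  have hX1 : (1:ℝ) ∈ X := Finset.mem_insert_of_mem (Finset.mem_insert_self _ _)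
  have hY0 : (0:ℝ) ∈ Y := Finset.mem_insert_self _ _
  have hY1 : (1:ℝ) ∈ Y := Finset.mem_insert_of_mem (Finset.mem_insert_self _ _)
  have hXx : ∀ i, x i ∈ X := fun i => by
    simp [hX]
  have hXxw : ∀ i, x i + w i ∈ X := fun i => by
    simp [hX]
  have hYy : ∀ i, y i ∈ Y := fun i => by
    simp [hY]
  have hYyh : ∀ i, y i + h i ∈ Y := fun i => by
    simp [hY]
  have hXrange : ∀ z ∈ X, 0 ≤ z ∧ z ≤ 1 := by
    intro z hz
    simp only [hX, Finset.mem_insert, Finset.mem_union, Finset.mem_image,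
      Finset.mem_univ, true_and] at hz
    rcases hz with rfl | rfl | ⟨i, rfl⟩ | ⟨i, rfl⟩
    · norm_num
    · norm_num
    · exact ⟨(hbound i).1, by linarith [(hbound i).1, (hbound i).2.1, hw i]⟩
    · exact ⟨by linarith [(hbound i).1, hw i], (hbound i).2.1⟩
  have hYrange : ∀ z ∈ Y, 0 ≤ z ∧ z ≤ 1 := by
    intro z hz
    simp only [hY, Finset.mem_insert, Finset.mem_union, Finset.mem_image,
      Finset.mem_univ, true_and] at hz
    rcases hz with rfl | rfl | ⟨i, rfl⟩ | ⟨i, rfl⟩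
    · norm_num
    · norm_num
    · exact ⟨(hbound i).2.2.1, by linarith [(hbound i).2.2.1, (hbound i).2.2.2, hh i]⟩
    · exact ⟨by linarith [(hbound i).2.2.1, hh i], (hbound i).2.2.2⟩
  set NX := X.card with hNX
  set NY := Y.card with hNY
  set ex := gridFun X with hex
  set ey := gridFun Y with hey
  choose k0 hk0lt hk0 using fun i => gridFun_surj X (hXx i)
  choose k1 hk1lt hk1 using fun i => gridFun_surj X (hXxw i)
  choose l0 hl0lt hl0 using fun i => gridFun_surj Y (hYy i)
  choose l1 hl1lt hl1 using fun i => gridFun_surj Y (hYyh i)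
  rw [← hex] at hk0 hk1
  rw [← hey] at hl0 hl1
  rw [← hNX] at hk0lt hk1lt
  rw [← hNY] at hl0lt hl1lt
  have hNXpos : 0 < NX := Finset.card_pos.2 ⟨0, hX0⟩
  have hNYpos : 0 < NY := Finset.card_pos.2 ⟨0, hY0⟩
  -- filter description of the index interval
  have hIcoX : ∀ i, Finset.Ico (k0 i) (k1 i)
      = (Finset.range (NX - 1)).filter (fun k => x i ≤ ex k ∧ ex (k+1) ≤ x i + w i) := by
    intro i
    ext k
    simp only [Finset.mem_Ico, Finset.mem_filter, Finset.mem_range]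
    constructor
    · rintro ⟨h1, h2⟩
      have hkNX : k < NX := lt_trans h2 (hk1lt i)
      have hk1NX : k + 1 < NX := Nat.lt_of_le_of_lt h2 (hk1lt i)
      refine ⟨by omega, ?_, ?_⟩
      · rw [← hk0 i]; exact (gridFun_le_iff X (hk0lt i) hkNX).2 h1
      · rw [← hk1 i]; exact (gridFun_le_iff X hk1NX (hk1lt i)).2 h2
    · rintro ⟨hkr, h1, h2⟩
      have hkNX : k < NX := by omega
      have hk1NX : k + 1 < NX := by omega
      constructor
      · rw [← hk0 i] at h1; exact (gridFun_le_iff X (hk0lt i) hkNX).1 h1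
      · rw [← hk1 i] at h2
        exact (gridFun_le_iff X hk1NX (hk1lt i)).1 h2
  have hIcoY : ∀ i, Finset.Ico (l0 i) (l1 i)
      = (Finset.range (NY - 1)).filter (fun l => y i ≤ ey l ∧ ey (l+1) ≤ y i + h i) := by
    intro i
    ext l
    simp only [Finset.mem_Ico, Finset.mem_filter, Finset.mem_range]
    constructor
    · rintro ⟨h1, h2⟩
      have hlNY : l < NY := lt_trans h2 (hl1lt i)
      have hl1NY : l + 1 < NY := Nat.lt_of_le_of_lt h2 (hl1lt i)
      refine ⟨by omega, ?_, ?_⟩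
      · rw [← hl0 i]; exact (gridFun_le_iff Y (hl0lt i) hlNY).2 h1
      · rw [← hl1 i]; exact (gridFun_le_iff Y hl1NY (hl1lt i)).2 h2
    · rintro ⟨hlr, h1, h2⟩
      have hlNY : l < NY := by omega
      have hl1NY : l + 1 < NY := by omega
      constructor
      · rw [← hl0 i] at h1; exact (gridFun_le_iff Y (hl0lt i) hlNY).1 h1
      · rw [← hl1 i] at h2
        exact (gridFun_le_iff Y hl1NY (hl1lt i)).1 h2
  -- per-rectangle decomposition
  have step1 : ∀ i, (f (x i + w i) - f (x i)) * (f (y i + h i) - f (y i))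
      = ∑ k ∈ Finset.range (NX - 1), ∑ l ∈ Finset.range (NY - 1),
          (if x i ≤ ex k ∧ ex (k+1) ≤ x i + w i ∧ y i ≤ ey l ∧ ey (l+1) ≤ y i + h i
            then (f (ex (k+1)) - f (ex k)) * (f (ey (l+1)) - f (ey l)) else 0) := by
    intro i
    have hk01 : k0 i ≤ k1 i := by
      have : ex (k0 i) < ex (k1 i) := by rw [hk0 i, hk1 i]; linarith [hw i]
      exact le_of_lt ((gridFun_lt_iff X (hk0lt i) (hk1lt i)).1 this)
    have hl01 : l0 i ≤ l1 i := by
      have : ey (l0 i) < ey (l1 i) := by rw [hl0 i, hl1 i]; linarith [hh i]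
      exact le_of_lt ((gridFun_lt_iff Y (hl0lt i) (hl1lt i)).1 this)
    have tx : f (x i + w i) - f (x i)
        = ∑ k ∈ Finset.Ico (k0 i) (k1 i), (f (ex (k+1)) - f (ex k)) := by
      rw [telescope_Ico (fun k => f (ex k)) hk01, hk0 i, hk1 i]
    have ty : f (y i + h i) - f (y i)
        = ∑ l ∈ Finset.Ico (l0 i) (l1 i), (f (ey (l+1)) - f (ey l)) := by
      rw [telescope_Ico (fun l => f (ey l)) hl01, hl0 i, hl1 i]
    rw [tx, ty, hIcoX i, hIcoY i, Finset.sum_filter, Finset.sum_filter,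
      Finset.sum_mul_sum]
    apply Finset.sum_congr rfl
    intro k _
    apply Finset.sum_congr rfl
    intro l _
    by_cases h1 : x i ≤ ex k ∧ ex (k+1) ≤ x i + w i <;>
      by_cases h2 : y i ≤ ey l ∧ ey (l+1) ≤ y i + h i <;>
      simp [h1, h2]
  rw [Finset.sum_congr rfl (fun i _ => step1 i)]
  rw [Finset.sum_comm]
  -- now goal: ∑ k, ∑ i, ∑ l ... ; need to swap inner too
  have swap2 : ∀ k, (∑ i : Fin n, ∑ l ∈ Finset.range (NY - 1),
      (if x i ≤ ex k ∧ ex (k+1) ≤ x i + w i ∧ y i ≤ ey l ∧ ey (l+1) ≤ y i + h i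
        then (f (ex (k+1)) - f (ex k)) * (f (ey (l+1)) - f (ey l)) else 0))
      = ∑ l ∈ Finset.range (NY - 1), ∑ i : Fin n,
      (if x i ≤ ex k ∧ ex (k+1) ≤ x i + w i ∧ y i ≤ ey l ∧ ey (l+1) ≤ y i + h i
        then (f (ex (k+1)) - f (ex k)) * (f (ey (l+1)) - f (ey l)) else 0) :=
    fun k => Finset.sum_comm
  rw [Finset.sum_congr rfl (fun k _ => swap2 k)]
  -- each cell is covered exactly once
  have hcell : ∀ k ∈ Finset.range (NX - 1), ∀ l ∈ Finset.range (NY - 1),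
      (∑ i : Fin n,
      (if x i ≤ ex k ∧ ex (k+1) ≤ x i + w i ∧ y i ≤ ey l ∧ ey (l+1) ≤ y i + h i
        then (f (ex (k+1)) - f (ex k)) * (f (ey (l+1)) - f (ey l)) else 0))
      = (f (ex (k+1)) - f (ex k)) * (f (ey (l+1)) - f (ey l)) := by
    intro k hk l hl
    rw [Finset.mem_range] at hk hl
    have hkNX : k < NX := by omega
    have hk1NX : k + 1 < NX := by omega
    have hlNY : l < NY := by omega
    have hl1NY : l + 1 < NY := by omega
    have hxlt : ex k < ex (k+1) := (gridFun_lt_iff X hkNX hk1NX).2 (lt_add_one k)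
    have hylt : ey l < ey (l+1) := (gridFun_lt_iff Y hlNY hl1NY).2 (lt_add_one l)
    set mx := (ex k + ex (k+1)) / 2 with hmx
    set my := (ey l + ey (l+1)) / 2 with hmy
    have hmx1 : ex k < mx := by rw [hmx]; linarith
    have hmx2 : mx < ex (k+1) := by rw [hmx]; linarith
    have hmy1 : ey l < my := by rw [hmy]; linarith
    have hmy2 : my < ey (l+1) := by rw [hmy]; linarith
    have hmxs : mx ∈ Icc (0:ℝ) 1 := by
      constructor
      · linarith [(hXrange _ (gridFun_mem X hkNX)).1]
      · linarith [(hXrange _ (gridFun_mem X hk1NX)).2]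
    have hmys : my ∈ Icc (0:ℝ) 1 := by
      constructor
      · linarith [(hYrange _ (gridFun_mem Y hlNY)).1]
      · linarith [(hYrange _ (gridFun_mem Y hl1NY)).2]
    have hmem : ((mx, my) : ℝ × ℝ) ∈
        ⋃ i, Icc (x i) (x i + w i) ×ˢ Icc (y i) (y i + h i) := by
      rw [hU]; exact ⟨hmxs, hmys⟩
    obtain ⟨i0, hi0⟩ := mem_iUnion.1 hmem
    obtain ⟨⟨hi0a, hi0b⟩, ⟨hi0c, hi0d⟩⟩ := hi0
    -- i0 satisfies the condition
    have hcond : ∀ j : Fin n,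
        (x j ≤ ex k ∧ ex (k+1) ≤ x j + w j ∧ y j ≤ ey l ∧ ey (l+1) ≤ y j + h j)
        ↔ j = i0 := by
      intro j
      constructor
      · rintro ⟨ha, hb, hc, hd⟩
        by_contra hne
        have hmem1 : ((mx, my) : ℝ × ℝ) ∈
            Ioo (x j) (x j + w j) ×ˢ Ioo (y j) (y j + h j) :=
          ⟨⟨lt_of_le_of_lt ha hmx1, lt_of_lt_of_le hmx2 hb⟩,
           ⟨lt_of_le_of_lt hc hmy1, lt_of_lt_of_le hmy2 hd⟩⟩
        -- i0 also satisfies the open membership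
        have hI0a : x i0 ≤ ex k := by
          by_contra hcon
          push_neg at hcon
          have := (gridFun_succ_le_of_lt X (hXx i0) hkNX hcon).2
          linarith
        have hI0b : ex (k+1) ≤ x i0 + w i0 := by
          have hgt : ex k < x i0 + w i0 := lt_of_lt_of_le hmx1 hi0b
          exact (gridFun_succ_le_of_lt X (hXxw i0) hkNX hgt).2
        have hI0c : y i0 ≤ ey l := by
          by_contra hcon
          push_neg at hcon
          have := (gridFun_succ_le_of_lt Y (hYy i0) hlNY hcon).2
          linarith
        have hI0d : ey (l+1) ≤ y i0 + h i0 := by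
          have hgt : ey l < y i0 + h i0 := lt_of_lt_of_le hmy1 hi0d
          exact (gridFun_succ_le_of_lt Y (hYyh i0) hlNY hgt).2
        have hmem2 : ((mx, my) : ℝ × ℝ) ∈
            Ioo (x i0) (x i0 + w i0) ×ˢ Ioo (y i0) (y i0 + h i0) :=
          ⟨⟨lt_of_le_of_lt hI0a hmx1, lt_of_lt_of_le hmx2 hI0b⟩,
           ⟨lt_of_le_of_lt hI0c hmy1, lt_of_lt_of_le hmy2 hI0d⟩⟩
        exact Set.disjoint_left.1 (hD j i0 hne) hmem1 hmem2
      · rintro rfl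
        refine ⟨?_, ?_, ?_, ?_⟩
        · by_contra hcon
          push_neg at hcon
          have := (gridFun_succ_le_of_lt X (hXx j) hkNX hcon).2
          linarith
        · exact (gridFun_succ_le_of_lt X (hXxw j) hkNX (lt_of_lt_of_le hmx1 hi0b)).2
        · by_contra hcon
          push_neg at hcon
          have := (gridFun_succ_le_of_lt Y (hYy j) hlNY hcon).2
          linarith
        · exact (gridFun_succ_le_of_lt Y (hYyh j) hlNY (lt_of_lt_of_le hmy1 hi0d)).2
    rw [Finset.sum_congr rfl (fun j _ => by rw [if_congr (hcond j) rfl rfl])]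
    simp
  rw [Finset.sum_congr rfl (fun k hk => Finset.sum_congr rfl (fun l hl => hcell k hk l hl))]
  -- final telescoping
  rw [← Finset.sum_mul_sum]
  have tX : ∑ k ∈ Finset.range (NX - 1), (f (ex (k+1)) - f (ex k)) = f 1 - f 0 := by
    rw [Finset.range_eq_Ico, telescope_Ico (fun k => f (ex k)) (Nat.zero_le _)]
    rw [show ex (NX - 1) = 1 from gridFun_last X hX1 (fun z hz => (hXrange z hz).2),
        show ex 0 = 0 from gridFun_zero X hX0 (fun z hz => (hXrange z hz).1)]
  have tY : ∑ l ∈ Finset.range (NY - 1), (f (ey (l+1)) - f (ey l)) = f 1 - f 0 := by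
    rw [Finset.range_eq_Ico, telescope_Ico (fun l => f (ey l)) (Nat.zero_le _)]
    rw [show ey (NY - 1) = 1 from gridFun_last Y hY1 (fun z hz => (hYrange z hz).2),
        show ey 0 = 0 from gridFun_zero Y hY0 (fun z hz => (hYrange z hz).1)]
  rw [tX, tY]


open Set

/-- A square cannot be partitioned into finitely many axis-parallel rectangles
each having side ratio (horizontal/vertical) `√2` or `1/√2`. -/
theorem no_square_partition_ratio_sqrt_two :
    ¬ ∃ (n : ℕ) (x y w h : Fin n → ℝ),
      (∀ i, 0 < w i) ∧ (∀ i, 0 < h i) ∧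
      (∀ i, w i / h i = Real.sqrt 2 ∨ w i / h i = 1 / Real.sqrt 2) ∧
      (⋃ i, Icc (x i) (x i + w i) ×ˢ Icc (y i) (y i + h i))
        = Icc (0:ℝ) 1 ×ˢ Icc (0:ℝ) 1 ∧
      (∀ i j, i ≠ j →
        Disjoint (Ioo (x i) (x i + w i) ×ˢ Ioo (y i) (y i + h i))
                 (Ioo (x j) (x j + w j) ×ˢ Ioo (y j) (y j + h j))) := by
  rintro ⟨n, x, y, w, h, hw, hh, hr, hU, hD⟩
  obtain ⟨f, hadd, hf1, hfs⟩ := exists_dehn_fun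
  have hf0 : f 0 = 0 := by
    have := hadd 0 0
    simp only [add_zero] at this
    linarith
  have key := grid_sum x y w h hw hh hU hD f
  have hsqrt2 : (0:ℝ) < Real.sqrt 2 := Real.sqrt_pos.2 (by norm_num)
  have hterm : ∀ i, (f (x i + w i) - f (x i)) * (f (y i + h i) - f (y i)) ≤ 0 := by
    intro i
    have e1 : f (x i + w i) - f (x i) = f (w i) := by rw [hadd]; ring
    have e2 : f (y i + h i) - f (y i) = f (h i) := by rw [hadd]; ring
    rw [e1, e2]
    rcases hr i with hri | hri
    · rw [div_eq_iff (ne_of_gt (hh i))] at hri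
      rw [hri, hfs]
      nlinarith [sq_nonneg (f (h i)), hsqrt2.le]
    · rw [div_eq_div_iff (ne_of_gt (hh i)) (ne_of_gt hsqrt2)] at hri
      have : h i = Real.sqrt 2 * w i := by linarith
      rw [this, hfs]
      nlinarith [sq_nonneg (f (w i)), hsqrt2.le]
  have hsum : ∑ i, (f (x i + w i) - f (x i)) * (f (y i + h i) - f (y i)) ≤ 0 :=
    Finset.sum_nonpos (fun i _ => hterm i)
  rw [key, hf1, hf0] at hsum
  linarith
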